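/- Fix an integer n ≥ 0, and for 0 ≤ k ≤ n define the polynomial B_{k,n}(x) := Σ_{j=0}^k (-1)^j C(k,j) / (n(n-1)⋯(n-j+1)) · x^j ∈ ℂ[x] (with the j = 0 term equal to 1); set B_{n+1,n} := 0 and B_{-1,n} := 0. Then for every 0 ≤ k ≤ n one has the congruence x·B_{k,n}(x) ≡ (k − n)·B_{k+1,n}(x) + (n − 2k)·B_{k,n}(x) + k·B_{k-1,n}(x) modulo x^{n+1}. -/

import Mathlib

/-- The polynomial `B_{m,n}(x) = Σ_{j=0}^m (-1)^j C(m,j)/(n(n-1)⋯(n-j+1)) x^j` for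
`m ≤ n`, and `0` otherwise (covering the boundary case `B_{n+1,n} = 0`). -/
noncomputable def Bpoly (n m : ℕ) : Polynomial ℂ :=
  if m ≤ n then
    ∑ j ∈ Finset.range (m + 1),
      Polynomial.C ((-1 : ℂ) ^ j * (m.choose j : ℂ) / (n.descFactorial j : ℂ)) *
        Polynomial.X ^ j
  else 0

lemma Bpoly_coeff (n m : ℕ) (hm : m ≤ n) (d : ℕ) :
    (Bpoly n m).coeff d
      = (-1 : ℂ) ^ d * (m.choose d : ℂ) / (n.descFactorial d : ℂ) := by
  rw [Bpoly, if_pos hm, Polynomial.finset_sum_coeff]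
  simp only [Polynomial.coeff_C_mul, Polynomial.coeff_X_pow, mul_ite, mul_one, mul_zero]
  rw [Finset.sum_ite_eq (Finset.range (m+1)) d]
  split
  · rfl
  · rename_i h
    rw [Finset.mem_range, Nat.lt_succ_iff, not_le] at h
    rw [Nat.choose_eq_zero_of_lt h]
    simp

lemma keyC (z : ℂ) (k e : ℕ) :
    (z - e) * (k.choose e : ℂ) + ((k:ℂ) - z) * ((k+1).choose (e+1) : ℂ)
      + (z - 2*k) * (k.choose (e+1) : ℂ) + (k : ℂ) * ((k-1).choose (e+1) : ℂ) = 0 := by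
  have h1 : (((k+1).choose (e+1) : ℕ) : ℂ) = (k.choose e : ℂ) + (k.choose (e+1) : ℂ) := by
    rw [Nat.choose_succ_succ]; push_cast; ring
  have h3 : ((e:ℂ)+1) * (k.choose (e+1) : ℂ) = ((k:ℂ) - e) * (k.choose e : ℂ) := by
    rcases le_or_gt e k with h | h
    · have h' := congrArg (Nat.cast (R := ℂ)) (Nat.choose_succ_right_eq k e)
      push_cast [Nat.cast_sub h] at h'
      linear_combination h'
    · rw [Nat.choose_eq_zero_of_lt h, Nat.choose_eq_zero_of_lt (by omega)]
      simp
  have h2 : (k : ℂ) * ((k-1).choose (e+1) : ℂ) = ((k:ℂ) - (e+1)) * (k.choose (e+1) : ℂ) := by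
    rcases lt_or_ge e k with h | h
    · have hk1 : k - 1 + 1 = k := by omega
      have ha : k * ((k-1).choose (e+1)) = k.choose (e+2) * (e+2) := by
        have := Nat.add_one_mul_choose_eq (k-1) (e+1)
        simpa [Nat.succ_eq_add_one, hk1] using this
      have hb := Nat.choose_succ_right_eq k (e+1)
      have h' := congrArg (Nat.cast (R := ℂ)) (ha.trans hb)
      push_cast [Nat.cast_sub (by omega : e + 1 ≤ k)] at h'
      linear_combination h'
    · rw [Nat.choose_eq_zero_of_lt (by omega), Nat.choose_eq_zero_of_lt (by omega)]
      simp
  linear_combination ((k:ℂ) - z) * h1 + h2 - h3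

/-- The congruence `x·B_{k,n} ≡ (k−n)·B_{k+1,n} + (n−2k)·B_{k,n} + k·B_{k-1,n}`
modulo `x^{n+1}`. -/
theorem Bpoly_recurrence (n k : ℕ) (hk : k ≤ n) :
    (Polynomial.X ^ (n + 1) : Polynomial ℂ) ∣
      (Polynomial.X * Bpoly n k -
        (Polynomial.C ((k : ℂ) - (n : ℂ)) * Bpoly n (k + 1) +
         Polynomial.C ((n : ℂ) - 2 * (k : ℂ)) * Bpoly n k +
         Polynomial.C (k : ℂ) * Bpoly n (k - 1))) := by
  rw [Polynomial.X_pow_dvd_iff]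
  intro d hd
  have hdn : d ≤ n := Nat.lt_succ_iff.mp hd
  rw [Polynomial.coeff_sub, Polynomial.coeff_add, Polynomial.coeff_add,
    Polynomial.coeff_C_mul, Polynomial.coeff_C_mul, Polynomial.coeff_C_mul,
    Bpoly_coeff n k hk d]
  have e1 : ((k:ℂ) - n) * (Bpoly n (k+1)).coeff d
      = ((k:ℂ) - n) * ((-1:ℂ)^d * (((k+1).choose d : ℂ)) / (n.descFactorial d : ℂ)) := by
    rcases eq_or_lt_of_le hk with rfl | h
    · simp [Bpoly]
    · rw [Bpoly_coeff n (k+1) h d]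
  have e2 : (k:ℂ) * (Bpoly n (k-1)).coeff d
      = (k:ℂ) * ((-1:ℂ)^d * (((k-1).choose d : ℂ)) / (n.descFactorial d : ℂ)) := by
    rcases Nat.eq_zero_or_pos k with rfl | h
    · simp
    · rw [Bpoly_coeff n (k-1) (le_trans (Nat.sub_le k 1) hk) d]
  rw [e1, e2]
  cases d with
  | zero =>
    rw [Polynomial.mul_coeff_zero, Polynomial.coeff_X_zero, zero_mul]
    simp only [pow_zero, Nat.choose_zero_right, Nat.descFactorial_zero, Nat.cast_one,
      Nat.cast_one, one_mul, div_one, mul_one]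
    ring
  | succ e =>
    rw [Polynomial.coeff_X_mul, Bpoly_coeff n k hk e]
    have hen : e < n := by omega
    have hDe : (n.descFactorial e : ℂ) ≠ 0 := by
      simp only [ne_eq, Nat.cast_eq_zero, Nat.descFactorial_eq_zero_iff_lt]
      omega
    have hne : (n:ℂ) - e ≠ 0 := by
      intro h
      have : (n:ℂ) = e := by linear_combination h
      exact absurd (Nat.cast_injective this) (by omega)
    have hds : ((n.descFactorial (e+1) : ℕ) : ℂ) = ((n:ℂ) - e) * (n.descFactorial e : ℂ) := by
      rw [Nat.descFactorial_succ]
      push_cast [Nat.cast_sub hen.le]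
      ring
    rw [hds]
    have key : ((n:ℂ) - e) * (k.choose e : ℂ) + ((k:ℂ) - n) * ((k+1).choose (e+1) : ℂ)
        + ((n:ℂ) - 2*k) * (k.choose (e+1) : ℂ)
        + (k : ℂ) * ((k-1).choose (e+1) : ℂ) = 0 := keyC (n:ℂ) k e
    field_simp
    linear_combination ((-1:ℂ)^e) * key
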